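/- A representative function on a Lie group is R-entire for every R < 1: if φ ∈ C^ω(G) has finite-dimensional orbit O_φ under left translations, then for every c ≥ 0, q_{R,c}(φ) ≤ Δ·‖φ‖·Σ_{k=0}^∞ k!^{R−1}(cΨn)^k < ∞, where Ψ bounds the operator norms of the Lie derivatives L_{X_i} on O_φ and Δ the norm of the evaluation functional at the unit. -/

import Mathlib

/-- Apply the operators `T i` along a list of indices, head of the list outermost. -/
def chainApply {W : Type*} [NormedAddCommGroup W] [NormedSpace ℂ W] {n : ℕ}
    (T : Fin n → W →L[ℂ] W) (l : List (Fin n)) (x : W) : W :=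
  l.foldr (fun i y => T i y) x


lemma summable_fact_rpow (R t : ℝ) (hR : R < 1) (ht : 0 ≤ t) :
    Summable (fun k : ℕ => (k.factorial : ℝ) ^ (R - 1) * t ^ k) := by
  rcases eq_or_lt_of_le ht with h0 | hpos
  · apply summable_of_ne_finset_zero (s := {0})
    intro k hk
    simp only [Finset.mem_singleton] at hk
    rw [← h0, zero_pow hk, mul_zero]
  · apply summable_of_ratio_test_tendsto_lt_one (l := 0) zero_lt_one
    · filter_upwards with k
      have h1 : (0:ℝ) < (k.factorial : ℝ) ^ (R - 1) :=
        Real.rpow_pos_of_pos (by exact_mod_cast k.factorial_pos) _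
      positivity
    · have key : ∀ k : ℕ, ‖(((k+1).factorial : ℝ) ^ (R - 1) * t ^ (k+1))‖ /
          ‖((k.factorial : ℝ) ^ (R - 1) * t ^ k)‖ = ((k:ℝ)+1) ^ (R - 1) * t := by
        intro k
        have hf : (0:ℝ) < (k.factorial : ℝ) := by exact_mod_cast k.factorial_pos
        have h1 : (0:ℝ) < (k.factorial : ℝ) ^ (R - 1) := Real.rpow_pos_of_pos hf _
        have h2 : (0:ℝ) < ((k+1).factorial : ℝ) ^ (R - 1) :=
          Real.rpow_pos_of_pos (by exact_mod_cast (k+1).factorial_pos) _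
        rw [Real.norm_of_nonneg (by positivity), Real.norm_of_nonneg (by positivity)]
        have : (((k+1).factorial : ℝ)) = ((k:ℝ)+1) * (k.factorial : ℝ) := by
          push_cast [Nat.factorial_succ]; ring
        rw [this, Real.mul_rpow (by positivity) hf.le, pow_succ]
        field_simp
      simp only [key]
      have : Filter.Tendsto (fun k : ℕ => ((k:ℝ)+1) ^ (R - 1)) Filter.atTop (nhds 0) := by
        have hneg : R - 1 < 0 := by linarith
        have := (tendsto_rpow_neg_atTop (y := -(R-1)) (by linarith)).comp
          (Filter.tendsto_atTop_add_const_right Filter.atTop 1 tendsto_natCast_atTop_atTop)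
        simpa [Function.comp_def] using this
      simpa using this.mul_const t

lemma chainApply_norm_le {W : Type*} [NormedAddCommGroup W] [NormedSpace ℂ W] {n : ℕ}
    (T : Fin n → W →L[ℂ] W) (Ψ : ℝ) (hΨ0 : 0 ≤ Ψ) (hΨ : ∀ i, ‖T i‖ ≤ Ψ)
    (l : List (Fin n)) (φ : W) : ‖chainApply T l φ‖ ≤ Ψ ^ l.length * ‖φ‖ := by
  induction l with
  | nil => simp [chainApply]
  | cons i l ih =>
    have : chainApply T (i :: l) φ = T i (chainApply T l φ) := rfl
    rw [this]
    calc ‖T i (chainApply T l φ)‖ ≤ ‖T i‖ * ‖chainApply T l φ‖ := (T i).le_opNorm _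
      _ ≤ Ψ * (Ψ ^ l.length * ‖φ‖) := by
          apply mul_le_mul (hΨ i) ih (norm_nonneg _) hΨ0
      _ = Ψ ^ (i :: l).length * ‖φ‖ := by rw [List.length_cons, pow_succ]; ring

/-- A representative function is `R`-entire for every `R < 1`: if `φ` lies in a
(finite-dimensional) normed space `W` (modelling its orbit `O_φ`) invariant under the
basis Lie derivatives `T i = L_{X_i}` whose operator norms are bounded by `Ψ`, and
`δ = δ_e` is the evaluation functional at the unit, then for every `c ≥ 0` the seminorm
`q_{R,c}(φ) = Σ_k k!^{R−1} c^k Σ_{α∈{1,…,n}^k} |δ(T_{α₁}⋯T_{α_k} φ)|` is finite and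
bounded by `Δ·‖φ‖·Σ_k k!^{R−1}(cΨn)^k < ∞`, where `Δ = ‖δ‖`. -/
theorem representative_function_R_entire {W : Type*}
    [NormedAddCommGroup W] [NormedSpace ℂ W] {n : ℕ}
    (T : Fin n → W →L[ℂ] W) (δ : W →L[ℂ] ℂ) (φ : W) (R c Ψ : ℝ)
    (hR : R < 1) (hc : 0 ≤ c) (hΨ0 : 0 ≤ Ψ) (hΨ : ∀ i, ‖T i‖ ≤ Ψ) :
    Summable (fun k : ℕ => (k.factorial : ℝ) ^ (R - 1) * (c * Ψ * n) ^ k) ∧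
    Summable (fun k : ℕ => (k.factorial : ℝ) ^ (R - 1) * c ^ k *
      ∑ α : Fin k → Fin n, ‖δ (chainApply T (List.ofFn α) φ)‖) ∧
    ∑' k : ℕ, (k.factorial : ℝ) ^ (R - 1) * c ^ k *
        ∑ α : Fin k → Fin n, ‖δ (chainApply T (List.ofFn α) φ)‖ ≤
      ‖δ‖ * ‖φ‖ * ∑' k : ℕ, (k.factorial : ℝ) ^ (R - 1) * (c * Ψ * n) ^ k := by
  have hsum1 := summable_fact_rpow R (c * Ψ * n) hR (by positivity)
  set S : ℕ → ℝ := fun k => ∑ α : Fin k → Fin n, ‖δ (chainApply T (List.ofFn α) φ)‖ with hSdef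
  have hSnn : ∀ k, 0 ≤ S k := fun k => Finset.sum_nonneg fun _ _ => norm_nonneg _
  have hterm : ∀ k : ℕ, (k.factorial : ℝ) ^ (R - 1) * c ^ k * S k ≤
      ‖δ‖ * ‖φ‖ * ((k.factorial : ℝ) ^ (R - 1) * (c * Ψ * n) ^ k) := by
    intro k
    have hS : S k ≤ (n ^ k : ℕ) * (‖δ‖ * (Ψ ^ k * ‖φ‖)) := by
      have : S k ≤ ∑ _α : Fin k → Fin n, ‖δ‖ * (Ψ ^ k * ‖φ‖) := by
        apply Finset.sum_le_sum
        intro α _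
        calc ‖δ (chainApply T (List.ofFn α) φ)‖ ≤ ‖δ‖ * ‖chainApply T (List.ofFn α) φ‖ :=
              δ.le_opNorm _
          _ ≤ ‖δ‖ * (Ψ ^ k * ‖φ‖) := by
              apply mul_le_mul_of_nonneg_left _ (norm_nonneg δ)
              simpa using chainApply_norm_le T Ψ hΨ0 hΨ (List.ofFn α) φ
      simpa [Finset.sum_const, Finset.card_univ, mul_comm] using this
    have hF : (0:ℝ) ≤ (k.factorial : ℝ) ^ (R - 1) :=
      Real.rpow_nonneg (by positivity) _
    calc (k.factorial : ℝ) ^ (R - 1) * c ^ k * S k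
        ≤ (k.factorial : ℝ) ^ (R - 1) * c ^ k * ((n ^ k : ℕ) * (‖δ‖ * (Ψ ^ k * ‖φ‖))) :=
          mul_le_mul_of_nonneg_left hS (by positivity)
      _ = ‖δ‖ * ‖φ‖ * ((k.factorial : ℝ) ^ (R - 1) * (c * Ψ * n) ^ k) := by
          push_cast
          rw [mul_pow, mul_pow]
          ring
  have hsum2 : Summable (fun k : ℕ => (k.factorial : ℝ) ^ (R - 1) * c ^ k * S k) := by
    apply Summable.of_nonneg_of_le _ hterm (hsum1.mul_left (‖δ‖ * ‖φ‖))
    intro k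
    have hF : (0:ℝ) ≤ (k.factorial : ℝ) ^ (R - 1) := Real.rpow_nonneg (by positivity) _
    have := hSnn k
    positivity
  refine ⟨hsum1, hsum2, ?_⟩
  calc ∑' k : ℕ, (k.factorial : ℝ) ^ (R - 1) * c ^ k * S k
      ≤ ∑' k : ℕ, ‖δ‖ * ‖φ‖ * ((k.factorial : ℝ) ^ (R - 1) * (c * Ψ * n) ^ k) :=
        Summable.tsum_le_tsum hterm hsum2 (hsum1.mul_left _)
    _ = ‖δ‖ * ‖φ‖ * ∑' k : ℕ, (k.factorial : ℝ) ^ (R - 1) * (c * Ψ * n) ^ k := tsum_mul_left
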